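/- Let G be a finite simple graph and f a uniformly random labeling with fixed label counts. For distinct labels i != j, Cov(R_{ii}, R_{ij}) = (sum_t |G_t|^2 - 2|G|) * n_i n_j (n_i-1)/(N(N-1)(N-2)) + 2(|G|^2 - sum_t |G_t|^2 + |G|) * n_i n_j (n_i-1)(n_i-2)/(N(N-1)(N-2)(N-3)) - E(R_{ii}) E(R_{ij}). -/

import Mathlib

open Finset

variable {V : Type*} [Fintype V] [DecidableEq V] {K : ℕ}

/-- The set of labelings `f : V → Fin K` with exactly `n k` vertices labeled `k`. -/
def labelings (n : Fin K → ℕ) : Finset (V → Fin K) :=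
  Finset.univ.filter fun f => ∀ k, (Finset.univ.filter fun x => f x = k).card = n k

/-- Probability of an event under the uniform distribution on `labelings n`. -/
noncomputable def prob (n : Fin K → ℕ) (P : (V → Fin K) → Prop) [DecidablePred P] : ℝ :=
  (((labelings n).filter P).card : ℝ) / (((labelings n : Finset (V → Fin K))).card : ℝ)

/-- Expectation of a real random variable under the uniform distribution on `labelings n`. -/
noncomputable def expect (n : Fin K → ℕ) (X : (V → Fin K) → ℝ) : ℝ :=
  (∑ f ∈ labelings n, X f) / (((labelings n : Finset (V → Fin K))).card : ℝ)

/-- Covariance under the uniform distribution on `labelings n`. -/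
noncomputable def covar (n : Fin K → ℕ) (X Y : (V → Fin K) → ℝ) : ℝ :=
  expect n (fun f => (X f - expect n X) * (Y f - expect n Y))

/-- `Rcount G f i j` is the number of edges of `G` whose endpoint labels (under `f`)
are exactly the unordered pair `{i, j}`. -/
def Rcount (G : SimpleGraph V) [DecidableRel G.Adj] (f : V → Fin K) (i j : Fin K) : ℕ :=
  (G.edgeFinset.filter fun e => Sym2.map f e = s(i, j)).card

set_option linter.unusedSectionVars false
set_option maxHeartbeats 1000000


section Aux

variable {n : Fin K → ℕ}

lemma mem_labelings {f : V → Fin K} :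

    f ∈ labelings (V := V) n ↔ ∀ k, (univ.filter fun x => f x = k).card = n k := by

  simp [labelings]

lemma labelings_nonempty (hsum : ∑ k, n k = Fintype.card V) :

    (labelings (V := V) n).Nonempty := by

  have hcard : Fintype.card V = Fintype.card (Σ k : Fin K, Fin (n k)) := by

    simp [Fintype.card_sigma, hsum]

  obtain ⟨φ⟩ := Fintype.card_eq.mp hcard

  refine ⟨fun v => (φ v).1, ?_⟩

  rw [mem_labelings]

  intro k

  rw [← Fintype.card_subtype]

  have e1 : {x : V // (φ x).1 = k} ≃ {s : Σ k' : Fin K, Fin (n k') // s.1 = k} :=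

    φ.subtypeEquiv fun v => Iff.rfl

  have e2 : {s : Σ k' : Fin K, Fin (n k') // s.1 = k} ≃ Fin (n k) := by

    refine ⟨fun s => Fin.cast (by rw [s.2]) s.1.2, fun x => ⟨⟨k, x⟩, rfl⟩, ?_, ?_⟩

    · rintro ⟨⟨k', x⟩, h⟩

      subst h

      rfl

    · intro x

      rfl

  rw [Fintype.card_congr (e1.trans e2), Fintype.card_fin]

lemma comp_mem_labelings (σ : Equiv.Perm V) {f : V → Fin K} (hf : f ∈ labelings (V := V) n) :

    (f ∘ σ) ∈ labelings (V := V) n := by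

  rw [mem_labelings] at hf ⊢

  intro k

  rw [← hf k]

  apply Finset.card_bij (fun x _ => σ x)

  · intro a ha

    simp_all

  · intro a _ b _ h

    exact σ.injective h

  · intro b hb

    exact ⟨σ.symm b, by simp_all, by simp⟩

lemma card_filter_comp (σ : Equiv.Perm V) (P : (V → Fin K) → Prop) [DecidablePred P] :

    ((labelings (V := V) n).filter fun f => P (f ∘ σ)).card

      = ((labelings (V := V) n).filter P).card := by

  apply Finset.card_bij (fun f _ => f ∘ σ)

  · intro f hf

    rw [mem_filter] at hf ⊢

    exact ⟨comp_mem_labelings σ hf.1, hf.2⟩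

  · intro f _ g _ h

    funext x

    have := congrFun h (σ.symm x)

    simpa using this

  · intro g hg

    rw [mem_filter] at hg

    refine ⟨g ∘ σ.symm, ?_, by funext x; simp⟩

    rw [mem_filter]

    refine ⟨comp_mem_labelings σ.symm hg.1, ?_⟩

    have : (g ∘ ⇑σ.symm) ∘ ⇑σ = g := by funext x; simp

    rw [this]

    exact hg.2

lemma exists_perm_comp {r : ℕ} (e e' : Fin r ↪ V) :

    ∃ σ : Equiv.Perm V, ∀ t, σ (e t) = e' t := by

  classical

  let q1 := Equiv.ofInjective e e.injective

  let q2 := Equiv.ofInjective e' e'.injective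

  refine ⟨(q1.symm.trans q2).extendSubtype, fun t => ?_⟩

  have h1 : e t ∈ Set.range e := ⟨t, rfl⟩

  rw [Equiv.extendSubtype_apply_of_mem _ _ h1]

  show (q2 (q1.symm ⟨e t, h1⟩) : V) = e' t

  have : q1.symm ⟨e t, h1⟩ = t := by

    apply q1.injective

    simp [q1, Equiv.ofInjective_apply]

  rw [this]

  rfl

end Aux

section Aux

variable {n : Fin K → ℕ}

lemma cnt_const {r : ℕ} (c : Fin r → Fin K) (e e' : Fin r ↪ V) :

    ((labelings (V := V) n).filter fun f => ∀ t, f (e t) = c t).card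

      = ((labelings (V := V) n).filter fun f => ∀ t, f (e' t) = c t).card := by

  classical

  obtain ⟨σ, hσ⟩ := exists_perm_comp e' e

  have h := card_filter_comp (n := n) σ (fun f => ∀ t, f (e' t) = c t)

  simp only [Function.comp_apply, hσ] at h

  exact h

private lemma Ecast {r : ℕ} {f : V → Fin K} {c : Fin r → Fin K}

    (E : ∀ k, ({t : Fin r // c t = k} ↪ {v : V // f v = k}))

    {k k' : Fin K} (h : k = k') (t : Fin r) (ht : c t = k) :

    ((E k ⟨t, ht⟩ : {v // f v = k}) : V) = ((E k' ⟨t, h ▸ ht⟩ : {v // f v = k'}) : V) := by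

  subst h; rfl

noncomputable def embFiberEquiv {r : ℕ} (f : V → Fin K) (c : Fin r → Fin K) :

    {e : Fin r ↪ V // ∀ t, f (e t) = c t}

      ≃ ∀ k, ({t : Fin r // c t = k} ↪ {v : V // f v = k}) where

  toFun e k := ⟨fun t => ⟨e.1 t.1, by rw [e.2 t.1]; exact t.2⟩,

    fun t t' h => Subtype.ext (e.1.injective (congrArg Subtype.val h))⟩

  invFun E := ⟨⟨fun t => (E (c t) ⟨t, rfl⟩).1, by

    intro t t' h

    dsimp only at h

    have h2 : f ((E (c t) ⟨t, rfl⟩ : {v // f v = c t}) : V) = c t := (E (c t) ⟨t, rfl⟩).2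

    have h2' : f ((E (c t') ⟨t', rfl⟩ : {v // f v = c t'}) : V) = c t' := (E (c t') ⟨t', rfl⟩).2

    have hc : c t' = c t := by rw [← h2', ← h, h2]

    have hcast := Ecast E hc t' rfl

    rw [hcast] at h

    have := (E (c t)).injective (Subtype.ext h)

    exact congrArg Subtype.val this⟩,

    fun t => (E (c t) ⟨t, rfl⟩).2⟩

  left_inv e := Subtype.ext (Function.Embedding.ext fun t => rfl)

  right_inv E := by

    funext k

    apply Function.Embedding.ext

    rintro ⟨t, ht⟩

    subst ht

    rfl

lemma card_emb_fiber {r : ℕ} {f : V → Fin K} (hf : f ∈ labelings (V := V) n)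

    (c : Fin r → Fin K) :

    Fintype.card {e : Fin r ↪ V // ∀ t, f (e t) = c t}

      = ∏ k, (n k).descFactorial (univ.filter fun t => c t = k).card := by

  classical

  rw [Fintype.card_congr (embFiberEquiv f c), Fintype.card_pi]

  refine Finset.prod_congr rfl fun k _ => ?_

  rw [Fintype.card_embedding_eq, Fintype.card_subtype, Fintype.card_subtype,

    mem_labelings.mp hf k]

lemma key {r : ℕ} (c : Fin r → Fin K) (e : Fin r ↪ V) :

    ((labelings (V := V) n).filter fun f => ∀ t, f (e t) = c t).card

        * (Fintype.card V).descFactorial r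

      = (labelings (V := V) n).card

        * ∏ k, (n k).descFactorial (univ.filter fun t => c t = k).card := by

  classical

  have step1 : ∑ e' : Fin r ↪ V,

      ((labelings (V := V) n).filter fun f => ∀ t, f (e' t) = c t).card

      = ((labelings (V := V) n).filter fun f => ∀ t, f (e t) = c t).card

          * (Fintype.card V).descFactorial r := by

    rw [Finset.sum_congr rfl (fun e' _ => cnt_const c e' e), Finset.sum_const,

      smul_eq_mul, Finset.card_univ, Fintype.card_embedding_eq, Fintype.card_fin,

      mul_comm]

  rw [← step1]

  have step2 : ∀ e' : Fin r ↪ V,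

      ((labelings (V := V) n).filter fun f => ∀ t, f (e' t) = c t).card

        = ∑ f ∈ labelings (V := V) n, if (∀ t, f (e' t) = c t) then 1 else 0 := by

    intro e'

    rw [Finset.card_filter]

  simp_rw [step2]

  rw [Finset.sum_comm]

  rw [Finset.sum_congr rfl (fun f hf => ?_), Finset.sum_const, smul_eq_mul]

  rw [← card_emb_fiber hf c, Fintype.card_subtype]

  rw [Finset.card_filter]

end Aux

section Pat

variable {n : Fin K → ℕ} {i j : Fin K}

lemma prod_helper (hij : i ≠ j) (w : Fin K → ℕ)

    (h0 : ∀ k, k ≠ i → k ≠ j → w k = 0) :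

    ∏ k, (n k).descFactorial (w k)

      = (n i).descFactorial (w i) * (n j).descFactorial (w j) := by

  rw [← Finset.mul_prod_erase univ _ (mem_univ i),

      ← Finset.mul_prod_erase (univ.erase i) _ (Finset.mem_erase.mpr ⟨hij.symm, mem_univ j⟩)]

  have h1 : ∏ k ∈ (univ.erase i).erase j, (n k).descFactorial (w k) = 1 :=

    Finset.prod_eq_one fun k hk => by

      rw [mem_erase, mem_erase] at hk

      rw [h0 k hk.2.1 hk.1]

      rfl

  rw [h1, mul_one]

lemma keyC2ii {a b : V} (hab : a ≠ b) :

    ((labelings (V := V) n).filter fun f => f a = i ∧ f b = i).card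

        * (Fintype.card V).descFactorial 2

      = (labelings (V := V) n).card * (n i).descFactorial 2 := by

  classical

  have hinj : Function.Injective ![a, b] := by

    intro s t h

    fin_cases s <;> fin_cases t <;> simp_all

  have h := key (n := n) ![i, i] ⟨![a, b], hinj⟩

  have hset : ((labelings (V := V) n).filter fun f => ∀ t, f (![a,b] t) = ![i,i] t)

      = (labelings (V := V) n).filter fun f => f a = i ∧ f b = i := by

    ext f

    simp [Fin.forall_fin_two]

  simp only [Function.Embedding.coeFn_mk] at h

  rw [hset] at h

  rw [h]

  congr 1

  have : ∀ k : Fin K, (univ.filter fun t : Fin 2 => ![i,i] t = k).card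

      = if i = k then 2 else 0 := by

    intro k

    rw [Finset.card_filter, Fin.sum_univ_two]

    by_cases h : i = k <;> simp [h]

  simp_rw [this]

  rw [← Finset.mul_prod_erase univ _ (mem_univ i)]

  have h1 : ∏ k ∈ univ.erase i, (n k).descFactorial (if i = k then 2 else 0) = 1 :=

    Finset.prod_eq_one fun k hk => by

      rw [mem_erase] at hk

      rw [if_neg (Ne.symm hk.1)]

      rfl

  rw [h1, mul_one, if_pos rfl]

lemma keyC2ij (hij : i ≠ j) {a b : V} (hab : a ≠ b) :

    ((labelings (V := V) n).filter fun f => f a = i ∧ f b = j).card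

        * (Fintype.card V).descFactorial 2

      = (labelings (V := V) n).card * ((n i).descFactorial 1 * (n j).descFactorial 1) := by

  classical

  have hinj : Function.Injective ![a, b] := by

    intro s t h

    fin_cases s <;> fin_cases t <;> simp_all

  have h := key (n := n) ![i, j] ⟨![a, b], hinj⟩

  have hset : ((labelings (V := V) n).filter fun f => ∀ t, f (![a,b] t) = ![i,j] t)

      = (labelings (V := V) n).filter fun f => f a = i ∧ f b = j := by

    ext f

    simp [Fin.forall_fin_two]

  simp only [Function.Embedding.coeFn_mk] at h

  rw [hset] at h

  rw [h]

  congr 1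

  rw [prod_helper hij _ (fun k hki hkj => by

    rw [Finset.card_filter, Fin.sum_univ_two]

    simp [Ne.symm hki, Ne.symm hkj])]

  congr 2

  · rw [Finset.card_filter, Fin.sum_univ_two]

    simp [hij, hij.symm]

  · rw [Finset.card_filter, Fin.sum_univ_two]

    simp [hij, hij.symm]

lemma keyC3 (hij : i ≠ j) {a b c : V} (hab : a ≠ b) (hac : a ≠ c) (hbc : b ≠ c) :

    ((labelings (V := V) n).filter fun f => f a = i ∧ f b = i ∧ f c = j).card

        * (Fintype.card V).descFactorial 3

      = (labelings (V := V) n).card * ((n i).descFactorial 2 * (n j).descFactorial 1) := by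

  classical

  have hinj : Function.Injective ![a, b, c] := by

    intro s t h

    fin_cases s <;> fin_cases t <;> simp_all

  have h := key (n := n) ![i, i, j] ⟨![a, b, c], hinj⟩

  have hset : ((labelings (V := V) n).filter fun f => ∀ t, f (![a,b,c] t) = ![i,i,j] t)

      = (labelings (V := V) n).filter fun f => f a = i ∧ f b = i ∧ f c = j := by

    ext f

    simp [Fin.forall_fin_succ, Fin.forall_fin_two]

  simp only [Function.Embedding.coeFn_mk] at h

  rw [hset] at h

  rw [h]

  congr 1

  rw [prod_helper hij _ (fun k hki hkj => by

    rw [Finset.card_filter, Fin.sum_univ_three]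

    simp [Ne.symm hki, Ne.symm hkj])]

  congr 2

  · rw [Finset.card_filter, Fin.sum_univ_three]

    simp [hij, hij.symm]

  · rw [Finset.card_filter, Fin.sum_univ_three]

    simp [hij, hij.symm]

lemma keyC4 (hij : i ≠ j) {a b c d : V} (hab : a ≠ b) (hac : a ≠ c) (had : a ≠ d)

    (hbc : b ≠ c) (hbd : b ≠ d) (hcd : c ≠ d) :

    ((labelings (V := V) n).filter fun f => f a = i ∧ f b = i ∧ f c = i ∧ f d = j).card

        * (Fintype.card V).descFactorial 4

      = (labelings (V := V) n).card * ((n i).descFactorial 3 * (n j).descFactorial 1) := by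

  classical

  have hinj : Function.Injective ![a, b, c, d] := by

    intro s t h

    fin_cases s <;> fin_cases t <;> simp_all

  have h := key (n := n) ![i, i, i, j] ⟨![a, b, c, d], hinj⟩

  have hset : ((labelings (V := V) n).filter fun f => ∀ t, f (![a,b,c,d] t) = ![i,i,i,j] t)

      = (labelings (V := V) n).filter fun f => f a = i ∧ f b = i ∧ f c = i ∧ f d = j := by

    ext f

    simp [Fin.forall_fin_succ, Fin.forall_fin_two]

  simp only [Function.Embedding.coeFn_mk] at h

  rw [hset] at h

  rw [h]

  congr 1

  rw [prod_helper hij _ (fun k hki hkj => by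

    rw [Finset.card_filter, Fin.sum_univ_four]

    simp [Ne.symm hki, Ne.symm hkj])]

  congr 2

  · rw [Finset.card_filter, Fin.sum_univ_four]

    simp [hij, hij.symm]

  · rw [Finset.card_filter, Fin.sum_univ_four]

    simp [hij, hij.symm]

end Pat

lemma cd1 (x : ℕ) : ((x.descFactorial 1 : ℕ) : ℝ) = x := by

  rw [Nat.descFactorial_one]

lemma cd2 (x : ℕ) : ((x.descFactorial 2 : ℕ) : ℝ) = x * (x - 1) := by

  rcases Nat.lt_or_ge x 1 with h | h

  · interval_cases x

    simp

  · rw [Nat.descFactorial_succ, Nat.descFactorial_one]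

    push_cast [Nat.cast_sub h]

    ring

lemma cd3 (x : ℕ) : ((x.descFactorial 3 : ℕ) : ℝ) = x * (x - 1) * (x - 2) := by

  rcases Nat.lt_or_ge x 2 with h | h

  · interval_cases x <;> simp [Nat.descFactorial] <;> ring

  · rw [Nat.descFactorial_succ, Nat.descFactorial_succ, Nat.descFactorial_one]

    push_cast [Nat.cast_sub h, Nat.cast_sub (show 1 ≤ x from le_trans one_le_two h)]

    ring

lemma cd4 (x : ℕ) : ((x.descFactorial 4 : ℕ) : ℝ) = x * (x - 1) * (x - 2) * (x - 3) := by

  rcases Nat.lt_or_ge x 3 with h | h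

  · interval_cases x <;> simp [Nat.descFactorial] <;> ring

  · rw [Nat.descFactorial_succ, Nat.descFactorial_succ, Nat.descFactorial_succ,

      Nat.descFactorial_one]

    push_cast [Nat.cast_sub h, Nat.cast_sub (le_trans (by norm_num : (2:ℕ) ≤ 3) h),

      Nat.cast_sub (le_trans (by norm_num : (1:ℕ) ≤ 3) h)]

    ring

variable (G : SimpleGraph V) [DecidableRel G.Adj]

def Spairs : Finset (V × V) := univ.filter fun p => G.Adj p.1 p.2

lemma mem_Spairs {p : V × V} : p ∈ Spairs G ↔ G.Adj p.1 p.2 := by simp [Spairs]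

lemma fiber_card {u v : V} (huv : G.Adj u v) :

    ((Spairs G).filter fun p => s(p.1, p.2) = s(u, v)).card = 2 := by

  have hset : ((Spairs G).filter fun p => s(p.1, p.2) = s(u, v)) = {(u, v), (v, u)} := by

    ext ⟨x, y⟩

    simp only [mem_filter, mem_Spairs, Sym2.eq_iff, mem_insert, mem_singleton, Prod.mk.injEq]

    constructor

    · rintro ⟨_, (⟨rfl, rfl⟩ | ⟨rfl, rfl⟩)⟩

      · exact Or.inl ⟨rfl, rfl⟩

      · exact Or.inr ⟨rfl, rfl⟩

    · rintro (⟨rfl, rfl⟩ | ⟨rfl, rfl⟩)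

      · exact ⟨huv, Or.inl ⟨rfl, rfl⟩⟩

      · exact ⟨huv.symm, Or.inr ⟨rfl, rfl⟩⟩

  rw [hset, card_insert_of_notMem, card_singleton]

  simp only [mem_singleton, Prod.mk.injEq, not_and]

  intro h

  exact absurd h (G.ne_of_adj huv)

lemma sum_Spairs_sym2 {M : Type*} [AddCommMonoid M] (w : Sym2 V → M) :

    ∑ p ∈ Spairs G, w s(p.1, p.2) = ∑ e ∈ G.edgeFinset, 2 • w e := by

  rw [← Finset.sum_fiberwise_of_maps_to (g := fun p : V × V => s(p.1, p.2))

    (t := G.edgeFinset) (fun p hp => by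

      rw [SimpleGraph.mem_edgeFinset]

      exact (mem_Spairs G).mp hp) (fun p => w s(p.1, p.2))]

  refine Finset.sum_congr rfl fun e he => ?_

  rw [Finset.sum_congr rfl (fun p hp => by rw [(Finset.mem_filter.mp hp).2] :

    ∀ p ∈ (Spairs G).filter fun p => s(p.1, p.2) = e,

      w s(p.1, p.2) = w e), Finset.sum_const]

  rw [SimpleGraph.mem_edgeFinset] at he

  induction e with

  | _ u v =>

    rw [fiber_card G he]

lemma sum_Spairs_swap {M : Type*} [AddCommMonoid M] (F : V × V → M) :

    ∑ p ∈ Spairs G, F p = ∑ p ∈ Spairs G, F (p.2, p.1) := by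

  apply Finset.sum_nbij' (fun p => (p.2, p.1)) (fun p => (p.2, p.1)) <;>

    simp [mem_Spairs, SimpleGraph.adj_comm]

lemma sum_Spairs_eq {M : Type*} [AddCommMonoid M] (F : V × V → M) :

    ∑ p ∈ Spairs G, F p = ∑ a, ∑ b ∈ G.neighborFinset a, F (a, b) := by

  rw [Spairs, Finset.sum_filter, Fintype.sum_prod_type]

  refine Finset.sum_congr rfl fun a _ => ?_

  rw [SimpleGraph.neighborFinset_eq_filter, Finset.sum_filter]

lemma card_Spairs : (Spairs G).card = 2 * G.edgeFinset.card := by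

  have h := sum_Spairs_eq G (fun _ => (1 : ℕ))

  simp only [Finset.sum_const, smul_eq_mul, mul_one, Finset.card_univ] at h

  rw [h]

  have h2 := G.sum_degrees_eq_twice_card_edges

  simp only [← SimpleGraph.card_neighborFinset_eq_degree] at h2

  exact h2

lemma sum_Spairs_deg_fst :

    ∑ p ∈ Spairs G, G.degree p.1 = ∑ a, G.degree a * G.degree a := by

  rw [sum_Spairs_eq]

  refine Finset.sum_congr rfl fun a _ => ?_

  dsimp only

  show ∑ _b ∈ G.neighborFinset a, G.degree a = _
  rw [Finset.sum_const, smul_eq_mul, SimpleGraph.card_neighborFinset_eq_degree]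

lemma sum_Spairs_deg_snd :

    ∑ p ∈ Spairs G, G.degree p.2 = ∑ a, G.degree a * G.degree a := by

  rw [sum_Spairs_swap]

  exact sum_Spairs_deg_fst G

variable (G : SimpleGraph V) [DecidableRel G.Adj]

lemma Rcount_ii (f : V → Fin K) (i : Fin K) :

    2 * Rcount G f i i = ∑ p ∈ Spairs G, if f p.1 = i ∧ f p.2 = i then 1 else 0 := by

  have h := sum_Spairs_sym2 G (fun e => if Sym2.map f e = s(i, i) then (1 : ℕ) else 0)

  have hconv : ∀ p ∈ Spairs G, (if Sym2.map f s(p.1, p.2) = s(i, i) then (1 : ℕ) else 0)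

      = (if f p.1 = i ∧ f p.2 = i then (1 : ℕ) else 0) := by

    intro p _

    simp only [Sym2.map_pair_eq, Sym2.eq_iff]

    refine if_congr ?_ rfl rfl

    constructor

    · rintro (⟨h1, h2⟩ | ⟨h1, h2⟩) <;> exact ⟨h1, h2⟩

    · rintro ⟨h1, h2⟩

      exact Or.inl ⟨h1, h2⟩

  rw [Finset.sum_congr rfl hconv] at h

  rw [h, Rcount, Finset.card_filter, Finset.mul_sum]

  exact Finset.sum_congr rfl fun e _ => by simp [smul_eq_mul]

lemma Rcount_ij (f : V → Fin K) {i j : Fin K} (hij : i ≠ j) :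

    Rcount G f i j = ∑ p ∈ Spairs G, if f p.1 = i ∧ f p.2 = j then 1 else 0 := by

  have h := sum_Spairs_sym2 G (fun e => if Sym2.map f e = s(i, j) then (1 : ℕ) else 0)

  have hsplit : ∀ p ∈ Spairs G,

      (if Sym2.map f s(p.1, p.2) = s(i, j) then (1 : ℕ) else 0)

        = (if f p.1 = i ∧ f p.2 = j then (1 : ℕ) else 0)

          + (if f p.1 = j ∧ f p.2 = i then (1 : ℕ) else 0) := by

    intro p _

    simp only [Sym2.map_pair_eq, Sym2.eq_iff]

    by_cases hA : f p.1 = i ∧ f p.2 = j <;> by_cases hB : f p.1 = j ∧ f p.2 = i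

    · exact absurd (hA.1.symm.trans hB.1) hij

    · simp [hA, hB, hij, hij.symm]

    · simp [hA, hB, hij, hij.symm]

    · simp [hA, hB, hij, hij.symm]

  rw [Finset.sum_congr rfl hsplit, Finset.sum_add_distrib] at h

  have hswap : ∑ p ∈ Spairs G, (if f p.1 = j ∧ f p.2 = i then (1 : ℕ) else 0)

      = ∑ p ∈ Spairs G, (if f p.1 = i ∧ f p.2 = j then (1 : ℕ) else 0) := by

    rw [sum_Spairs_swap G (fun p => if f p.1 = j ∧ f p.2 = i then (1 : ℕ) else 0)]

    exact Finset.sum_congr rfl fun p _ => if_congr and_comm rfl rfl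

  rw [hswap, ← two_mul] at h

  have h2 : ∑ e ∈ G.edgeFinset, 2 • (if Sym2.map f e = s(i, j) then (1 : ℕ) else 0)

      = 2 * Rcount G f i j := by

    rw [Rcount, Finset.card_filter, Finset.mul_sum]

    exact Finset.sum_congr rfl fun e _ => by simp [smul_eq_mul]

  rw [h2] at h

  exact (Nat.eq_of_mul_eq_mul_left (by norm_num) h).symm

variable {G}

lemma cardF1 {a b : V} (hab : G.Adj a b) :

    ((Spairs G).filter fun q => q.2 = a).card = G.degree a := by

  rw [← SimpleGraph.card_neighborFinset_eq_degree]

  apply Finset.card_bij (fun q _ => q.1)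

  · rintro ⟨x, y⟩ hq

    rw [mem_filter, mem_Spairs] at hq

    obtain ⟨hadj, rfl⟩ := hq

    simpa using hadj.symm

  · rintro ⟨x, y⟩ hq ⟨x', y'⟩ hq' h

    rw [mem_filter] at hq hq'

    cases hq.2

    cases hq'.2

    cases h

    rfl

  · intro d hd

    rw [SimpleGraph.mem_neighborFinset] at hd

    exact ⟨(d, a), by rw [mem_filter, mem_Spairs]; exact ⟨hd.symm, rfl⟩, rfl⟩

lemma cardF2 {a b : V} (hab : G.Adj a b) :

    ((Spairs G).filter fun q => ¬(q.2 = a) ∧ q.2 = b).card = G.degree b := by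

  have hne : b ≠ a := (G.ne_of_adj hab).symm

  have : ((Spairs G).filter fun q => ¬(q.2 = a) ∧ q.2 = b)

      = (Spairs G).filter fun q => q.2 = b := by

    refine Finset.filter_congr fun q _ => ?_

    constructor

    · exact fun h => h.2

    · exact fun h => ⟨by rw [h]; exact hne, h⟩

  rw [this, cardF1 hab.symm]

lemma cardF3 {a b : V} (hab : G.Adj a b) :

    ((Spairs G).filter fun q => ¬(q.2 = a) ∧ ¬(q.2 = b) ∧ q.1 = a).card

      = G.degree a - 1 := by

  rw [← SimpleGraph.card_neighborFinset_eq_degree,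

    ← Finset.card_erase_of_mem ((G.mem_neighborFinset a b).mpr hab)]

  apply Finset.card_bij (fun q _ => q.2)

  · rintro ⟨x, y⟩ hq

    rw [mem_filter, mem_Spairs] at hq

    obtain ⟨hadj, h1, h2, rfl⟩ := hq

    rw [Finset.mem_erase, SimpleGraph.mem_neighborFinset]

    exact ⟨h2, hadj⟩

  · rintro ⟨x, y⟩ hq ⟨x', y'⟩ hq' h

    rw [mem_filter] at hq hq'

    cases hq.2.2.2

    cases hq'.2.2.2

    cases h

    rfl

  · intro d hd

    rw [Finset.mem_erase, SimpleGraph.mem_neighborFinset] at hd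

    refine ⟨(a, d), ?_, rfl⟩

    rw [mem_filter, mem_Spairs]

    exact ⟨hd.2, fun h => G.ne_of_adj hd.2 (h ▸ rfl), hd.1, rfl⟩

lemma cardF4 {a b : V} (hab : G.Adj a b) :

    ((Spairs G).filter fun q => ¬(q.2 = a) ∧ ¬(q.2 = b) ∧ ¬(q.1 = a) ∧ q.1 = b).card

      = G.degree b - 1 := by

  have hne : b ≠ a := (G.ne_of_adj hab).symm

  have heq : ((Spairs G).filter fun q => ¬(q.2 = a) ∧ ¬(q.2 = b) ∧ ¬(q.1 = a) ∧ q.1 = b)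

      = (Spairs G).filter fun q => ¬(q.2 = b) ∧ ¬(q.2 = a) ∧ q.1 = b := by

    refine Finset.filter_congr fun q _ => ?_

    constructor

    · rintro ⟨h1, h2, h3, h4⟩

      exact ⟨h2, h1, h4⟩

    · rintro ⟨h1, h2, h3⟩

      exact ⟨h2, h1, by rw [h3]; exact hne, h3⟩

  rw [heq, cardF3 hab.symm]

lemma covar_eq {n : Fin K → ℕ} (h0 : (((labelings (V := V) n).card : ℕ) : ℝ) ≠ 0)
    (X Y : (V → Fin K) → ℝ) :
    covar n X Y = expect n (fun f => X f * Y f) - expect n X * expect n Y := by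
  have hrw : (fun f => (X f - expect n X) * (Y f - expect n Y))
      = fun f => X f * Y f - expect n X * Y f - expect n Y * X f
          + expect n X * expect n Y := funext fun f => by ring
  rw [covar, hrw, _root_.expect, Finset.sum_add_distrib, Finset.sum_sub_distrib,
    Finset.sum_sub_distrib, ← Finset.mul_sum, ← Finset.mul_sum, Finset.sum_const,
    nsmul_eq_mul]
  rw [_root_.expect, _root_.expect, _root_.expect]
  field_simp
  ring

theorem stmt_11 (G : SimpleGraph V) [DecidableRel G.Adj]
    (n : Fin K → ℕ) (N : ℕ) (hN : N = Fintype.card V) (hN4 : 4 ≤ N)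
    (hsum : ∑ k, n k = N) (i j : Fin K) (hij : i ≠ j)
    (m D : ℝ) (hm : m = (G.edgeFinset.card : ℝ))
    (hD : D = ∑ t : V, (G.degree t : ℝ) ^ 2) :
    covar n (fun f : V → Fin K => (Rcount G f i i : ℝ))
        (fun f : V → Fin K => (Rcount G f i j : ℝ))
      = (D - 2 * m) * ((n i : ℝ) * (n j : ℝ) * ((n i : ℝ) - 1)
            / ((N : ℝ) * ((N : ℝ) - 1) * ((N : ℝ) - 2)))
        + 2 * (m ^ 2 - D + m) * ((n i : ℝ) * (n j : ℝ) * ((n i : ℝ) - 1) * ((n i : ℝ) - 2)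
            / ((N : ℝ) * ((N : ℝ) - 1) * ((N : ℝ) - 2) * ((N : ℝ) - 3)))
        - (m * (n i : ℝ) * ((n i : ℝ) - 1) / ((N : ℝ) * ((N : ℝ) - 1)))
          * (2 * m * (n i : ℝ) * (n j : ℝ) / ((N : ℝ) * ((N : ℝ) - 1))) := by
  classical
  have hNV : Fintype.card V = N := hN.symm
  have hNVr : ((Fintype.card V : ℕ) : ℝ) = (N : ℝ) := by rw [hNV]
  have hN4r : (4 : ℝ) ≤ (N : ℝ) := by exact_mod_cast hN4
  have h0 : (N : ℝ) ≠ 0 := by linarith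
  have h1 : (N : ℝ) - 1 ≠ 0 := by
    have : (0 : ℝ) < (N : ℝ) - 1 := by linarith
    exact ne_of_gt this
  have h2 : (N : ℝ) - 2 ≠ 0 := by
    have : (0 : ℝ) < (N : ℝ) - 2 := by linarith
    exact ne_of_gt this
  have h3 : (N : ℝ) - 3 ≠ 0 := by
    have : (0 : ℝ) < (N : ℝ) - 3 := by linarith
    exact ne_of_gt this
  have hLne : (labelings (V := V) n).Nonempty :=
    labelings_nonempty (by rw [hsum, hN])
  have hLcne : (((labelings (V := V) n).card : ℕ) : ℝ) ≠ 0 := by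
    have := Finset.card_pos.mpr hLne
    exact_mod_cast this.ne'
  -- real abbreviations via plain haves (we keep everything spelled out)
  -- edge pair sums
  have hScardr : (((Spairs G).card : ℕ) : ℝ) = 2 * m := by
    rw [card_Spairs, hm]
    push_cast
    ring
  have hd1 : ∑ p ∈ Spairs G, ((G.degree p.1 : ℕ) : ℝ) = D := by
    have h := congrArg (fun t : ℕ => (t : ℝ)) (sum_Spairs_deg_fst G)
    push_cast at h
    rw [hD, h]
    exact Finset.sum_congr rfl fun a _ => (sq ((G.degree a : ℕ) : ℝ)).symm
  have hd2 : ∑ p ∈ Spairs G, ((G.degree p.2 : ℕ) : ℝ) = D := by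
    have h := congrArg (fun t : ℕ => (t : ℝ)) (sum_Spairs_deg_snd G)
    push_cast at h
    rw [hD, h]
    exact Finset.sum_congr rfl fun a _ => (sq ((G.degree a : ℕ) : ℝ)).symm
  have hlin : ∀ α β γ : ℝ,
      ∑ p ∈ Spairs G, (α + β * ((G.degree p.1 : ℕ) : ℝ) + γ * ((G.degree p.2 : ℕ) : ℝ))
        = α * (2 * m) + β * D + γ * D := by
    intro α β γ
    rw [Finset.sum_add_distrib, Finset.sum_add_distrib, ← Finset.mul_sum, ← Finset.mul_sum,
      hd1, hd2, Finset.sum_const, nsmul_eq_mul, hScardr]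
    ring
  -- counting identities, cast to ℝ
  -- (1) E X numerator
  have hAn : (∑ f ∈ labelings (V := V) n, 2 * Rcount G f i i)
        * (Fintype.card V).descFactorial 2
      = 2 * G.edgeFinset.card * ((labelings (V := V) n).card * (n i).descFactorial 2) := by
    have hstep : ∑ f ∈ labelings (V := V) n, 2 * Rcount G f i i
        = ∑ p ∈ Spairs G,
            ((labelings (V := V) n).filter fun f => f p.1 = i ∧ f p.2 = i).card := by
      rw [Finset.sum_congr rfl (fun f _ => Rcount_ii G f i), Finset.sum_comm]
      exact Finset.sum_congr rfl fun p _ => (Finset.card_filter _ _).symm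
    rw [hstep, Finset.sum_mul,
      Finset.sum_congr rfl (fun p hp => keyC2ii (G.ne_of_adj ((mem_Spairs G).mp hp))),
      Finset.sum_const, smul_eq_mul, card_Spairs]
  have hA : 2 * (∑ f ∈ labelings (V := V) n, ((Rcount G f i i : ℕ) : ℝ))
        * ((N : ℝ) * ((N : ℝ) - 1))
      = 2 * m * ((((labelings (V := V) n).card : ℕ) : ℝ)
          * ((n i : ℝ) * ((n i : ℝ) - 1))) := by
    have h := congrArg (fun t : ℕ => (t : ℝ)) hAn
    push_cast at h
    rw [cd2, cd2, hNVr] at h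
    rw [← Finset.mul_sum] at h
    rw [hm]
    push_cast
    linear_combination h
  -- (2) E Y numerator
  have hBn : (∑ f ∈ labelings (V := V) n, Rcount G f i j)
        * (Fintype.card V).descFactorial 2
      = 2 * G.edgeFinset.card * ((labelings (V := V) n).card
          * ((n i).descFactorial 1 * (n j).descFactorial 1)) := by
    have hstep : ∑ f ∈ labelings (V := V) n, Rcount G f i j
        = ∑ p ∈ Spairs G,
            ((labelings (V := V) n).filter fun f => f p.1 = i ∧ f p.2 = j).card := by
      rw [Finset.sum_congr rfl (fun f _ => Rcount_ij G f hij), Finset.sum_comm]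
      exact Finset.sum_congr rfl fun p _ => (Finset.card_filter _ _).symm
    rw [hstep, Finset.sum_mul,
      Finset.sum_congr rfl (fun p hp => keyC2ij hij (G.ne_of_adj ((mem_Spairs G).mp hp))),
      Finset.sum_const, smul_eq_mul, card_Spairs]
  have hB : (∑ f ∈ labelings (V := V) n, ((Rcount G f i j : ℕ) : ℝ))
        * ((N : ℝ) * ((N : ℝ) - 1))
      = 2 * m * ((((labelings (V := V) n).card : ℕ) : ℝ) * ((n i : ℝ) * (n j : ℝ))) := by
    have h := congrArg (fun t : ℕ => (t : ℝ)) hBn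
    push_cast at h
    rw [cd2, cd1, cd1, hNVr] at h
    rw [hm]
    push_cast
    linear_combination h
  -- (3) product numerator
  have hprod : ∑ f ∈ labelings (V := V) n, (2 * Rcount G f i i) * Rcount G f i j
      = ∑ p ∈ Spairs G, ∑ q ∈ Spairs G,
          ((labelings (V := V) n).filter fun f =>
            (f p.1 = i ∧ f p.2 = i) ∧ (f q.1 = i ∧ f q.2 = j)).card := by
    have h1 : ∀ f ∈ labelings (V := V) n, (2 * Rcount G f i i) * Rcount G f i j
        = ∑ p ∈ Spairs G, ∑ q ∈ Spairs G,
            (if (f p.1 = i ∧ f p.2 = i) ∧ (f q.1 = i ∧ f q.2 = j) then 1 else 0) := by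
      intro f _
      rw [Rcount_ii G f i, Rcount_ij G f hij, Finset.sum_mul_sum]
      refine Finset.sum_congr rfl fun p _ => Finset.sum_congr rfl fun q _ => ?_
      by_cases hA' : f p.1 = i ∧ f p.2 = i <;> by_cases hB' : f q.1 = i ∧ f q.2 = j <;>
        simp [hA', hB']
    rw [Finset.sum_congr rfl h1, Finset.sum_comm]
    refine Finset.sum_congr rfl fun p _ => ?_
    rw [Finset.sum_comm]
    exact Finset.sum_congr rfl fun q _ => (Finset.card_filter _ _).symm
  -- value lemmas
  have hv3 : ∀ x y z : V, x ≠ y → x ≠ z → y ≠ z →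
      ((((labelings (V := V) n).filter fun f => f x = i ∧ f y = i ∧ f z = j).card : ℕ) : ℝ)
          * ((N : ℝ) * ((N : ℝ) - 1) * ((N : ℝ) - 2) * ((N : ℝ) - 3))
        = (((labelings (V := V) n).card : ℕ) : ℝ)
            * ((n i : ℝ) * ((n i : ℝ) - 1) * (n j : ℝ)) * ((N : ℝ) - 3) := by
    intro x y z hxy hxz hyz
    have h := congrArg (fun t : ℕ => (t : ℝ)) (keyC3 (n := n) hij hxy hxz hyz)
    push_cast at h
    rw [cd3, cd2, cd1, hNVr] at h
    linear_combination ((N : ℝ) - 3) * h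
  have hv4 : ∀ x y z u : V, x ≠ y → x ≠ z → x ≠ u → y ≠ z → y ≠ u → z ≠ u →
      ((((labelings (V := V) n).filter fun f =>
            f x = i ∧ f y = i ∧ f z = i ∧ f u = j).card : ℕ) : ℝ)
          * ((N : ℝ) * ((N : ℝ) - 1) * ((N : ℝ) - 2) * ((N : ℝ) - 3))
        = (((labelings (V := V) n).card : ℕ) : ℝ)
            * ((n i : ℝ) * ((n i : ℝ) - 1) * ((n i : ℝ) - 2) * (n j : ℝ)) := by
    intro x y z u hxy hxz hxu hyz hyu hzu
    have h := congrArg (fun t : ℕ => (t : ℝ)) (keyC4 (n := n) hij hxy hxz hxu hyz hyu hzu)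
    push_cast at h
    rw [cd4, cd3, cd1, hNVr] at h
    linear_combination h
  -- the per-p computation
  have hper : ∀ p ∈ Spairs G,
      ∑ q ∈ Spairs G, ((((labelings (V := V) n).filter fun f =>
            (f p.1 = i ∧ f p.2 = i) ∧ (f q.1 = i ∧ f q.2 = j)).card : ℕ) : ℝ)
          * ((N : ℝ) * ((N : ℝ) - 1) * ((N : ℝ) - 2) * ((N : ℝ) - 3))
        = ((((G.degree p.1 : ℕ) : ℝ) - 1) + (((G.degree p.2 : ℕ) : ℝ) - 1))
            * ((((labelings (V := V) n).card : ℕ) : ℝ)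
                * ((n i : ℝ) * ((n i : ℝ) - 1) * (n j : ℝ)) * ((N : ℝ) - 3))
          + (2 * m - 2 * ((G.degree p.1 : ℕ) : ℝ) - 2 * ((G.degree p.2 : ℕ) : ℝ) + 2)
            * ((((labelings (V := V) n).card : ℕ) : ℝ)
                * ((n i : ℝ) * ((n i : ℝ) - 1) * ((n i : ℝ) - 2) * (n j : ℝ))) := by
    intro p hp
    have hadj : G.Adj p.1 p.2 := (mem_Spairs G).mp hp
    have hab : p.1 ≠ p.2 := G.ne_of_adj hadj
    have hdega : 1 ≤ G.degree p.1 := (G.degree_pos_iff_exists_adj p.1).mpr ⟨p.2, hadj⟩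
    have hdegb : 1 ≤ G.degree p.2 := (G.degree_pos_iff_exists_adj p.2).mpr ⟨p.1, hadj.symm⟩
    set g : V × V → ℝ := fun q => ((((labelings (V := V) n).filter fun f =>
        (f p.1 = i ∧ f p.2 = i) ∧ (f q.1 = i ∧ f q.2 = j)).card : ℕ) : ℝ)
        * ((N : ℝ) * ((N : ℝ) - 1) * ((N : ℝ) - 2) * ((N : ℝ) - 3)) with hg
    -- split the sum into five parts
    rw [← Finset.sum_filter_add_sum_filter_not (Spairs G) (fun q => q.2 = p.1) g,
      ← Finset.sum_filter_add_sum_filter_not ((Spairs G).filter fun q => ¬q.2 = p.1)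
        (fun q => q.2 = p.2) g,
      ← Finset.sum_filter_add_sum_filter_not (((Spairs G).filter fun q => ¬q.2 = p.1).filter
        fun q => ¬q.2 = p.2) (fun q => q.1 = p.1) g,
      ← Finset.sum_filter_add_sum_filter_not ((((Spairs G).filter fun q => ¬q.2 = p.1).filter
        fun q => ¬q.2 = p.2).filter fun q => ¬q.1 = p.1) (fun q => q.1 = p.2) g]
    -- rewrite the nested filters as conjunctive filters over Spairs
    have hs2 : ((Spairs G).filter fun q => ¬q.2 = p.1).filter (fun q => q.2 = p.2)
        = (Spairs G).filter fun q => ¬(q.2 = p.1) ∧ q.2 = p.2 := by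
      rw [Finset.filter_filter]
    have hs2' : ((Spairs G).filter fun q => ¬q.2 = p.1).filter (fun q => ¬q.2 = p.2)
        = (Spairs G).filter fun q => ¬(q.2 = p.1) ∧ ¬(q.2 = p.2) := by
      rw [Finset.filter_filter]
    have hs3 : (((Spairs G).filter fun q => ¬q.2 = p.1).filter fun q => ¬q.2 = p.2).filter
          (fun q => q.1 = p.1)
        = (Spairs G).filter fun q => ¬(q.2 = p.1) ∧ ¬(q.2 = p.2) ∧ q.1 = p.1 := by
      rw [hs2', Finset.filter_filter]
      exact Finset.filter_congr fun q _ => by tauto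
    have hs3' : (((Spairs G).filter fun q => ¬q.2 = p.1).filter fun q => ¬q.2 = p.2).filter
          (fun q => ¬q.1 = p.1)
        = (Spairs G).filter fun q => ¬(q.2 = p.1) ∧ ¬(q.2 = p.2) ∧ ¬(q.1 = p.1) := by
      rw [hs2', Finset.filter_filter]
      exact Finset.filter_congr fun q _ => by tauto
    have hs4 : ((((Spairs G).filter fun q => ¬q.2 = p.1).filter fun q => ¬q.2 = p.2).filter
          fun q => ¬q.1 = p.1).filter (fun q => q.1 = p.2)
        = (Spairs G).filter fun q =>
            ¬(q.2 = p.1) ∧ ¬(q.2 = p.2) ∧ ¬(q.1 = p.1) ∧ q.1 = p.2 := by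
      rw [hs3', Finset.filter_filter]
      exact Finset.filter_congr fun q _ => by tauto
    have hs4' : ((((Spairs G).filter fun q => ¬q.2 = p.1).filter fun q => ¬q.2 = p.2).filter
          fun q => ¬q.1 = p.1).filter (fun q => ¬q.1 = p.2)
        = (Spairs G).filter fun q =>
            ¬(q.2 = p.1) ∧ ¬(q.2 = p.2) ∧ ¬(q.1 = p.1) ∧ ¬(q.1 = p.2) := by
      rw [hs3', Finset.filter_filter]
      exact Finset.filter_congr fun q _ => by tauto
    -- part 1 is zero
    have hP1 : ∑ q ∈ (Spairs G).filter (fun q => q.2 = p.1), g q = 0 := by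
      refine Finset.sum_eq_zero fun q hq => ?_
      rw [Finset.mem_filter] at hq
      have hzero : ((labelings (V := V) n).filter fun f =>
          (f p.1 = i ∧ f p.2 = i) ∧ (f q.1 = i ∧ f q.2 = j)) = ∅ :=
        Finset.filter_false_of_mem fun f _ h =>
          hij (h.1.1.symm.trans (by rw [← hq.2]; exact h.2.2))
      rw [hg]
      simp [hzero]
    -- part 2 is zero
    have hP2 : ∑ q ∈ ((Spairs G).filter fun q => ¬q.2 = p.1).filter (fun q => q.2 = p.2),
        g q = 0 := by
      refine Finset.sum_eq_zero fun q hq => ?_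
      rw [hs2, Finset.mem_filter] at hq
      have hzero : ((labelings (V := V) n).filter fun f =>
          (f p.1 = i ∧ f p.2 = i) ∧ (f q.1 = i ∧ f q.2 = j)) = ∅ :=
        Finset.filter_false_of_mem fun f _ h =>
          hij (h.1.2.symm.trans (by rw [← hq.2.2]; exact h.2.2))
      rw [hg]
      simp [hzero]
    -- part 3
    have hP3 : ∑ q ∈ (((Spairs G).filter fun q => ¬q.2 = p.1).filter
          fun q => ¬q.2 = p.2).filter (fun q => q.1 = p.1), g q
        = (((G.degree p.1 : ℕ) : ℝ) - 1)
            * ((((labelings (V := V) n).card : ℕ) : ℝ)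
                * ((n i : ℝ) * ((n i : ℝ) - 1) * (n j : ℝ)) * ((N : ℝ) - 3)) := by
      rw [hs3]
      have hval : ∀ q ∈ (Spairs G).filter
          (fun q => ¬(q.2 = p.1) ∧ ¬(q.2 = p.2) ∧ q.1 = p.1),
          g q = (((labelings (V := V) n).card : ℕ) : ℝ)
              * ((n i : ℝ) * ((n i : ℝ) - 1) * (n j : ℝ)) * ((N : ℝ) - 3) := by
        intro q hq
        rw [Finset.mem_filter] at hq
        obtain ⟨hqS, hq1, hq2, hq3⟩ := hq
        have hWQ : ((labelings (V := V) n).filter fun f =>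
            (f p.1 = i ∧ f p.2 = i) ∧ (f q.1 = i ∧ f q.2 = j))
            = (labelings (V := V) n).filter fun f => f p.1 = i ∧ f p.2 = i ∧ f q.2 = j := by
          refine Finset.filter_congr fun f _ => ?_
          rw [hq3]
          constructor
          · rintro ⟨⟨ha1, ha2⟩, _, ha4⟩
            exact ⟨ha1, ha2, ha4⟩
          · rintro ⟨ha1, ha2, ha4⟩
            exact ⟨⟨ha1, ha2⟩, ha1, ha4⟩
        rw [hg]
        dsimp only
        rw [hWQ]
        exact hv3 p.1 p.2 q.2 hab (fun h => hq1 h.symm) (fun h => hq2 h.symm)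
      rw [Finset.sum_congr rfl hval, Finset.sum_const, nsmul_eq_mul, cardF3 hadj,
        Nat.cast_sub hdega, Nat.cast_one]
    -- part 4
    have hP4 : ∑ q ∈ ((((Spairs G).filter fun q => ¬q.2 = p.1).filter
          fun q => ¬q.2 = p.2).filter fun q => ¬q.1 = p.1).filter (fun q => q.1 = p.2), g q
        = (((G.degree p.2 : ℕ) : ℝ) - 1)
            * ((((labelings (V := V) n).card : ℕ) : ℝ)
                * ((n i : ℝ) * ((n i : ℝ) - 1) * (n j : ℝ)) * ((N : ℝ) - 3)) := by
      rw [hs4]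
      have hval : ∀ q ∈ (Spairs G).filter
          (fun q => ¬(q.2 = p.1) ∧ ¬(q.2 = p.2) ∧ ¬(q.1 = p.1) ∧ q.1 = p.2),
          g q = (((labelings (V := V) n).card : ℕ) : ℝ)
              * ((n i : ℝ) * ((n i : ℝ) - 1) * (n j : ℝ)) * ((N : ℝ) - 3) := by
        intro q hq
        rw [Finset.mem_filter] at hq
        obtain ⟨hqS, hq1, hq2, hq3, hq4⟩ := hq
        have hWQ : ((labelings (V := V) n).filter fun f =>
            (f p.1 = i ∧ f p.2 = i) ∧ (f q.1 = i ∧ f q.2 = j))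
            = (labelings (V := V) n).filter fun f => f p.1 = i ∧ f p.2 = i ∧ f q.2 = j := by
          refine Finset.filter_congr fun f _ => ?_
          rw [hq4]
          constructor
          · rintro ⟨⟨ha1, ha2⟩, _, ha4⟩
            exact ⟨ha1, ha2, ha4⟩
          · rintro ⟨ha1, ha2, ha4⟩
            exact ⟨⟨ha1, ha2⟩, ha2, ha4⟩
        rw [hg]
        dsimp only
        rw [hWQ]
        exact hv3 p.1 p.2 q.2 hab (fun h => hq1 h.symm) (fun h => hq2 h.symm)
      rw [Finset.sum_congr rfl hval, Finset.sum_const, nsmul_eq_mul, cardF4 hadj,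
        Nat.cast_sub hdegb, Nat.cast_one]
    -- part 5
    have hcard5 : (((((((Spairs G).filter fun q => ¬q.2 = p.1).filter
          fun q => ¬q.2 = p.2).filter fun q => ¬q.1 = p.1).filter
          (fun q => ¬q.1 = p.2)).card : ℕ) : ℝ)
        = 2 * m - 2 * ((G.degree p.1 : ℕ) : ℝ) - 2 * ((G.degree p.2 : ℕ) : ℝ) + 2 := by
      have e1 := Finset.card_filter_add_card_filter_not
        (s := Spairs G) (p := fun q => q.2 = p.1)
      have e2 := Finset.card_filter_add_card_filter_not
        (s := (Spairs G).filter fun q => ¬q.2 = p.1) (p := fun q => q.2 = p.2)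
      have e3 := Finset.card_filter_add_card_filter_not
        (s := ((Spairs G).filter fun q => ¬q.2 = p.1).filter fun q => ¬q.2 = p.2)
        (p := fun q => q.1 = p.1)
      have e4 := Finset.card_filter_add_card_filter_not
        (s := (((Spairs G).filter fun q => ¬q.2 = p.1).filter fun q => ¬q.2 = p.2).filter
          fun q => ¬q.1 = p.1) (p := fun q => q.1 = p.2)
      rw [cardF1 hadj] at e1
      rw [hs2, cardF2 hadj] at e2
      rw [hs3, cardF3 hadj] at e3
      rw [hs4, cardF4 hadj] at e4
      have ec1 := congrArg (fun t : ℕ => (t : ℝ)) e1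
      have ec2 := congrArg (fun t : ℕ => (t : ℝ)) e2
      have ec3 := congrArg (fun t : ℕ => (t : ℝ)) e3
      have ec4 := congrArg (fun t : ℕ => (t : ℝ)) e4
      push_cast [Nat.cast_sub hdega, Nat.cast_sub hdegb] at ec1 ec2 ec3 ec4
      rw [hScardr] at ec1
      linarith
    have hP5 : ∑ q ∈ (((((Spairs G).filter fun q => ¬q.2 = p.1).filter
          fun q => ¬q.2 = p.2).filter fun q => ¬q.1 = p.1).filter (fun q => ¬q.1 = p.2)), g q
        = (2 * m - 2 * ((G.degree p.1 : ℕ) : ℝ) - 2 * ((G.degree p.2 : ℕ) : ℝ) + 2)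
            * ((((labelings (V := V) n).card : ℕ) : ℝ)
                * ((n i : ℝ) * ((n i : ℝ) - 1) * ((n i : ℝ) - 2) * (n j : ℝ))) := by
      have hval : ∀ q ∈ ((((Spairs G).filter fun q => ¬q.2 = p.1).filter
          fun q => ¬q.2 = p.2).filter fun q => ¬q.1 = p.1).filter (fun q => ¬q.1 = p.2),
          g q = (((labelings (V := V) n).card : ℕ) : ℝ)
              * ((n i : ℝ) * ((n i : ℝ) - 1) * ((n i : ℝ) - 2) * (n j : ℝ)) := by
        intro q hq
        rw [hs4', Finset.mem_filter] at hq
        obtain ⟨hqS, hq1, hq2, hq3, hq4⟩ := hq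
        have hqadj : G.Adj q.1 q.2 := (mem_Spairs G).mp hqS
        have hWQ : ((labelings (V := V) n).filter fun f =>
            (f p.1 = i ∧ f p.2 = i) ∧ (f q.1 = i ∧ f q.2 = j))
            = (labelings (V := V) n).filter fun f =>
                f p.1 = i ∧ f p.2 = i ∧ f q.1 = i ∧ f q.2 = j := by
          refine Finset.filter_congr fun f _ => ?_
          tauto
        rw [hg]
        dsimp only
        rw [hWQ]
        exact hv4 p.1 p.2 q.1 q.2 hab (fun h => hq3 h.symm) (fun h => hq1 h.symm)
          (fun h => hq4 h.symm) (fun h => hq2 h.symm) (G.ne_of_adj hqadj)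
      rw [Finset.sum_congr rfl hval, Finset.sum_const, nsmul_eq_mul, ← hcard5]
    rw [hP1, hP2, hP3, hP4, hP5]
    ring
  -- combine: total product identity
  have hXY : 2 * (∑ f ∈ labelings (V := V) n,
        ((Rcount G f i i : ℕ) : ℝ) * ((Rcount G f i j : ℕ) : ℝ))
        * ((N : ℝ) * ((N : ℝ) - 1) * ((N : ℝ) - 2) * ((N : ℝ) - 3))
      = (-2 * ((((labelings (V := V) n).card : ℕ) : ℝ) * ((n i : ℝ) * ((n i : ℝ) - 1) * (n j : ℝ)) * ((N : ℝ) - 3)) + (2 * m + 2) * ((((labelings (V := V) n).card : ℕ) : ℝ) * ((n i : ℝ) * ((n i : ℝ) - 1) * ((n i : ℝ) - 2) * (n j : ℝ)))) * (2 * m) + (((((labelings (V := V) n).card : ℕ) : ℝ) * ((n i : ℝ) * ((n i : ℝ) - 1) * (n j : ℝ)) * ((N : ℝ) - 3)) - 2 * ((((labelings (V := V) n).card : ℕ) : ℝ) * ((n i : ℝ) * ((n i : ℝ) - 1) * ((n i : ℝ) - 2) * (n j : ℝ)))) * D + (((((labelings (V := V) n).card : ℕ) : ℝ) * ((n i : ℝ)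 * ((n i : ℝ) - 1) * (n j : ℝ)) * ((N : ℝ) - 3)) - 2 * ((((labelings (V := V) n).card : ℕ) : ℝ) * ((n i : ℝ) * ((n i : ℝ) - 1) * ((n i : ℝ) - 2) * (n j : ℝ)))) * D := by
    have hc := congrArg (fun t : ℕ => (t : ℝ)) hprod
    push_cast at hc
    have hlhs : ∑ f ∈ labelings (V := V) n,
        2 * ((Rcount G f i i : ℕ) : ℝ) * ((Rcount G f i j : ℕ) : ℝ)
        = 2 * ∑ f ∈ labelings (V := V) n,
            ((Rcount G f i i : ℕ) : ℝ) * ((Rcount G f i j : ℕ) : ℝ) := by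
      rw [Finset.mul_sum]
      exact Finset.sum_congr rfl fun f _ => by ring
    rw [hlhs] at hc
    rw [hc, Finset.sum_mul]
    have hstep : ∀ p ∈ Spairs G,
        (∑ q ∈ Spairs G, ((((labelings (V := V) n).filter fun f =>
            (f p.1 = i ∧ f p.2 = i) ∧ (f q.1 = i ∧ f q.2 = j)).card : ℕ) : ℝ))
          * ((N : ℝ) * ((N : ℝ) - 1) * ((N : ℝ) - 2) * ((N : ℝ) - 3))
        = (-2 * ((((labelings (V := V) n).card : ℕ) : ℝ) * ((n i : ℝ) * ((n i : ℝ) - 1) * (n j : ℝ)) * ((N : ℝ) - 3)) + (2 * m + 2) * ((((labelings (V := V) n).card : ℕ) : ℝ) * ((n i : ℝ) * ((n i : ℝ) - 1) * ((n i : ℝ) - 2) * (n j : ℝ)))) + (((((labelings (V := V) n).card : ℕ) : ℝ) * ((n i : ℝ) * ((n i : ℝ) - 1) * (n j : ℝ)) * ((N : ℝ) - 3)) - 2 * ((((labelings (V := V) n).card : ℕ) : ℝ) * ((n i : ℝ) * ((n i : ℝ) - 1) * ((n i : ℝ) - 2) * (n j : ℝ)))) * ((G.degree p.1 : ℕ)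 : ℝ) + (((((labelings (V := V) n).card : ℕ) : ℝ) * ((n i : ℝ) * ((n i : ℝ) - 1) * (n j : ℝ)) * ((N : ℝ) - 3)) - 2 * ((((labelings (V := V) n).card : ℕ) : ℝ) * ((n i : ℝ) * ((n i : ℝ) - 1) * ((n i : ℝ) - 2) * (n j : ℝ)))) * ((G.degree p.2 : ℕ) : ℝ) := by
      intro p hp
      rw [Finset.sum_mul, hper p hp]
      ring
    rw [Finset.sum_congr rfl hstep, hlin]
  -- closed forms for the three sums
  have hSX : ∑ f ∈ labelings (V := V) n, ((Rcount G f i i : ℕ) : ℝ)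
      = 2 * m * ((((labelings (V := V) n).card : ℕ) : ℝ) * ((n i : ℝ) * ((n i : ℝ) - 1))) / (2 * ((N : ℝ) * ((N : ℝ) - 1))) := by
    rw [eq_div_iff (mul_ne_zero two_ne_zero (mul_ne_zero h0 h1))]
    linear_combination hA
  have hSY : ∑ f ∈ labelings (V := V) n, ((Rcount G f i j : ℕ) : ℝ)
      = 2 * m * ((((labelings (V := V) n).card : ℕ) : ℝ) * ((n i : ℝ) * (n j : ℝ))) / ((N : ℝ) * ((N : ℝ) - 1)) := by
    rw [eq_div_iff (mul_ne_zero h0 h1)]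
    linear_combination hB
  have hSXY : ∑ f ∈ labelings (V := V) n,
        ((Rcount G f i i : ℕ) : ℝ) * ((Rcount G f i j : ℕ) : ℝ)
      = ((-2 * ((((labelings (V := V) n).card : ℕ) : ℝ) * ((n i : ℝ) * ((n i : ℝ) - 1) * (n j : ℝ)) * ((N : ℝ) - 3)) + (2 * m + 2) * ((((labelings (V := V) n).card : ℕ) : ℝ) * ((n i : ℝ) * ((n i : ℝ) - 1) * ((n i : ℝ) - 2) * (n j : ℝ)))) * (2 * m) + (((((labelings (V := V) n).card : ℕ) : ℝ) * ((n i : ℝ) * ((n i : ℝ) - 1) * (n j : ℝ)) * ((N : ℝ) - 3)) - 2 * ((((labelings (V := V) n).card : ℕ) : ℝ) * ((n i : ℝ) * ((n i : ℝ) - 1) * ((n i : ℝ) - 2) * (n j : ℝ)))) * D + (((((labelings (V := V) n).card : ℕ) : ℝ) * ((n i : ℝ) * ((n i : ℝ) - 1) * (n j : ℝ)) * ((N : ℝ) - 3)) - 2 * ((((labelings (V := V) n).card : ℕ) : ℝ) * ((n i : ℝ) * ((n i : ℝ) - 1) * ((n i : ℝ) - 2) * (n j : ℝ)))) * D)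
        / (2 * ((N : ℝ) * ((N : ℝ) - 1) * ((N : ℝ) - 2) * ((N : ℝ) - 3))) := by
    rw [eq_div_iff (mul_ne_zero two_ne_zero
      (mul_ne_zero (mul_ne_zero (mul_ne_zero h0 h1) h2) h3))]
    linear_combination hXY
  rw [covar_eq hLcne]
  simp only [_root_.expect]
  rw [hSX, hSY, hSXY]
  field_simp
  ring
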